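/- For every integer n ≥ 7, the graph K⁺_{3,n−3} obtained from the complete bipartite graph K_{3,n−3} by adding an edge joining two of the three vertices of degree n − 3 is ℤ₃-flow-critical, and it has 3n − 8 edges. -/

import Mathlib

open scoped Classical

section FlowDefs

variable {V : Type} [Fintype V] [DecidableEq V] {A : Type} [AddCommGroup A]

/-- `β` is an `A`-boundary for `G`: its values sum to zero on every connected component. -/
def IsBoundary (G : SimpleGraph V) (β : V → A) : Prop :=
  ∀ x : V, ∑ v ∈ Finset.univ.filter (fun v => G.Reachable v x), β v = 0

/-- `(G, β)` has a nowhere-zero flow: an antisymmetric function on ordered adjacent pairs,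
never zero on edges, whose out-sum at each vertex `u` is `β u`. -/
def HasNZFlow (G : SimpleGraph V) (β : V → A) : Prop :=
  ∃ f : V → V → A,
    (∀ u v, G.Adj u v → f u v = - f v u) ∧
    (∀ u v, G.Adj u v → f u v ≠ 0) ∧
    (∀ u : V, ∑ v ∈ Finset.univ.filter (fun v => G.Adj u v), f u v = β u)

/-- `(G, β)/P` has a nowhere-zero flow, where the partition `P` of `V(G)` is given as a setoid:
an antisymmetric, nowhere-zero function on the ordered adjacent pairs lying in distinct parts,
such that for every part, the sum of the values leaving the part is the sum of `β` on it. -/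
def HasNZFlowQuot (G : SimpleGraph V) (β : V → A) (P : Setoid V) : Prop :=
  ∃ f : V → V → A,
    (∀ u v, G.Adj u v → ¬ P.r u v → f u v = - f v u) ∧
    (∀ u v, G.Adj u v → ¬ P.r u v → f u v ≠ 0) ∧
    (∀ x : V,
      ∑ u ∈ Finset.univ.filter (fun u => P.r u x),
        ∑ v ∈ Finset.univ.filter (fun v => G.Adj u v ∧ ¬ P.r u v), f u v
      = ∑ v ∈ Finset.univ.filter (fun v => P.r v x), β v)

/-- The partition `P` is `G`-connected: every part induces a connected subgraph of `G`. -/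
def PartsConnected (G : SimpleGraph V) (P : Setoid V) : Prop :=
  ∀ x : V, (G.induce {v | P.r v x}).Connected

/-- `(G, β)` is a flow-critical `A`-bordered graph: `β` is an `A`-boundary, `G` is connected,
`(G, β)` has no nowhere-zero flow, but `(G, β)/P` has one for every `G`-connected partition `P`
with at least one part of size at least two. -/
def FlowCritical (G : SimpleGraph V) (β : V → A) : Prop :=
  IsBoundary G β ∧ G.Connected ∧ ¬ HasNZFlow G β ∧
  ∀ P : Setoid V, PartsConnected G P → (∃ x y : V, x ≠ y ∧ P.r x y) →
    HasNZFlowQuot G β P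

end FlowDefs

/-- `K⁺_{3,n−3}`: the complete bipartite graph `K_{3,n−3}` with an extra edge joining two of
the three vertices of degree `n − 3`. -/
def kThreePlus (n : ℕ) : SimpleGraph (Fin 3 ⊕ Fin (n - 3)) :=
  completeBipartiteGraph (Fin 3) (Fin (n - 3)) ⊔
    SimpleGraph.fromEdgeSet {s(Sum.inl 0, Sum.inl 1)}


section Aux
open Sum

def KB (m : ℕ) : SimpleGraph (Fin 3 ⊕ Fin m) :=
  completeBipartiteGraph (Fin 3) (Fin m) ⊔ SimpleGraph.fromEdgeSet {s(Sum.inl 0, Sum.inl 1)}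

lemma KB_adj_lr (m : ℕ) (i : Fin 3) (w : Fin m) : (KB m).Adj (inl i) (inr w) := by
  left; left; exact ⟨rfl, rfl⟩
lemma KB_adj_rl (m : ℕ) (i : Fin 3) (w : Fin m) : (KB m).Adj (inr w) (inl i) := by
  left; right; exact ⟨rfl, rfl⟩
lemma KB_adj_rr (m : ℕ) (w w' : Fin m) : ¬ (KB m).Adj (inr w) (inr w') := by
  rintro (⟨⟨_,h⟩|⟨h,_⟩⟩|h) <;> simp_all [SimpleGraph.fromEdgeSet_adj]
lemma KB_adj_ll (m : ℕ) (i j : Fin 3) :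
    (KB m).Adj (inl i) (inl j) ↔ (i = 0 ∧ j = 1) ∨ (i = 1 ∧ j = 0) := by
  constructor
  · rintro (⟨⟨_,h⟩|⟨h,_⟩⟩|h)
    · simp at h
    · simp at h
    · simp only [SimpleGraph.fromEdgeSet_adj, Set.mem_singleton_iff, Sym2.eq_iff] at h
      rcases h.1 with ⟨h1,h2⟩|⟨h1,h2⟩
      · left; exact ⟨inl.inj h1, inl.inj h2⟩
      · right; exact ⟨inl.inj h1, inl.inj h2⟩
  · rintro (⟨rfl,rfl⟩|⟨rfl,rfl⟩) <;> right <;>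
      simp [SimpleGraph.fromEdgeSet_adj, Sym2.eq_iff]

noncomputable section QuotFlow
variable {m : ℕ} (P : Setoid (Fin 3 ⊕ Fin m))

def gfun (η : Fin m → ZMod 3) (δ : Fin 3 → ZMod 3) (w₀ : Fin m) (w : Fin m) (i : Fin 3) :
    ZMod 3 :=
  η w + if w = w₀ then δ i else 0

def ffun (η : Fin m → ZMod 3) (δ : Fin 3 → ZMod 3) (w₀ : Fin m) (z : ZMod 3) :
    (Fin 3 ⊕ Fin m) → (Fin 3 ⊕ Fin m) → ZMod 3
  | inl i, inl j => if i = 0 ∧ j = 1 then z else if i = 1 ∧ j = 0 then -z else 0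
  | inl i, inr w => -(gfun η δ w₀ w i)
  | inr w, inl i => gfun η δ w₀ w i
  | inr _, inr _ => 0

lemma quot_flow_param (η : Fin m → ZMod 3) (δ : Fin 3 → ZMod 3) (w₀ : Fin m) (z : ZMod 3)
    (hδ : δ 0 + δ 1 + δ 2 = 0)
    (hη : ∀ w, η w ≠ 0)
    (hz : z ≠ 0)
    (hw0 : ∀ i, ¬ P.r (inr w₀) (inl i) → η w₀ + δ i ≠ 0)
    (hcond : ∀ x : Fin 3 ⊕ Fin m,
      ((if P.r (inl 0) x then (∑ w, η w) + δ 0 else 0) +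
       (if P.r (inl 1) x then (∑ w, η w) + δ 1 else 0) +
       (if P.r (inl 2) x then (∑ w, η w) + δ 2 else 0)) =
      (if P.r (inl 0) x then z else 0) - (if P.r (inl 1) x then z else 0)) :
    HasNZFlowQuot (KB m) (fun _ => (0 : ZMod 3)) P := by
  classical
  have h3 : (3 : ZMod 3) = 0 := by decide
  have grow : ∀ w, gfun η δ w₀ w 0 + gfun η δ w₀ w 1 + gfun η δ w₀ w 2 = 0 := by
    intro w
    unfold gfun
    by_cases h : w = w₀
    · simp only [h, if_true]
      linear_combination hδ + η w₀ * h3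
    · simp only [h, if_false]
      linear_combination η w * h3
  have gnz : ∀ w i, ¬ P.r (inr w) (inl i) → gfun η δ w₀ w i ≠ 0 := by
    intro w i hcr
    unfold gfun
    by_cases h : w = w₀
    · subst h; simp only [if_true]; exact hw0 i hcr
    · simp only [h, if_false, add_zero]; exact hη w
  refine ⟨ffun η δ w₀ z, ?_, ?_, ?_⟩
  · rintro (i|w) (j|w') hadj hcr
    · rcases (KB_adj_ll m i j).1 hadj with ⟨rfl, rfl⟩|⟨rfl, rfl⟩ <;>
        simp (config := { decide := true }) [ffun]
    · simp [ffun]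
    · simp [ffun]
    · exact absurd hadj (KB_adj_rr m w w')
  · rintro (i|w) (j|w') hadj hcr
    · rcases (KB_adj_ll m i j).1 hadj with ⟨rfl, rfl⟩|⟨rfl, rfl⟩ <;>
        simp (config := { decide := true }) [ffun] <;> exact hz
    · simpa [ffun] using gnz w' i (fun h => hcr (P.iseqv.symm h))
    · simpa [ffun] using gnz w j hcr
    · exact absurd hadj (KB_adj_rr m w w')
  · intro x
    simp (config := { decide := true }) only [Finset.sum_filter, Fintype.sum_sum_type,
      Fin.sum_univ_three, KB_adj_lr, KB_adj_rl, KB_adj_rr, KB_adj_ll, ffun, true_and,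
      false_and, and_true, and_false, true_or, or_true, false_or, or_false, if_true,
      if_false, Finset.sum_const_zero, add_zero, zero_add]
    have hG : ∀ i : Fin 3, (∑ w, gfun η δ w₀ w i) = (∑ w, η w) + δ i := by
      intro i
      unfold gfun
      rw [Finset.sum_add_distrib, Finset.sum_ite_eq' Finset.univ w₀ (fun _ => δ i)]
      simp
    have hcompl : ∀ i : Fin 3, (∑ w, if ¬ P.r (inr w) x then -(gfun η δ w₀ w i) else 0)
        = -(((∑ w, η w) + δ i) - (∑ w, if P.r (inr w) x then gfun η δ w₀ w i else 0)) := by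
      intro i
      rw [← hG i, neg_sub, ← Finset.sum_sub_distrib]
      refine Finset.sum_congr rfl fun w _ => ?_
      by_cases h : P.r (inr w) x <;> simp [h]
    have hS : (∑ w, if P.r (inr w) x then gfun η δ w₀ w 0 else 0)
        + (∑ w, if P.r (inr w) x then gfun η δ w₀ w 1 else 0)
        + (∑ w, if P.r (inr w) x then gfun η δ w₀ w 2 else 0) = 0 := by
      rw [← Finset.sum_add_distrib, ← Finset.sum_add_distrib]
      refine Finset.sum_eq_zero fun w _ => ?_
      by_cases h : P.r (inr w) x
      · simp only [h, if_true]; exact grow w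
      · simp [h]
    have hsplit : ∀ (a b : Fin m → ZMod 3),
        (∑ w, if P.r (inr w) x then a w + b w else 0)
        = (∑ w, if P.r (inr w) x then a w else 0) + (∑ w, if P.r (inr w) x then b w else 0) := by
      intro a b
      rw [← Finset.sum_add_distrib]
      refine Finset.sum_congr rfl fun w _ => ?_
      by_cases h : P.r (inr w) x <;> simp [h]
    have hwrow : (∑ w, if P.r (inr w) x then
          ((if ¬ P.r (inr w) (inl 0) then gfun η δ w₀ w 0 else 0) +
            if ¬ P.r (inr w) (inl 1) then gfun η δ w₀ w 1 else 0) +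
            if ¬ P.r (inr w) (inl 2) then gfun η δ w₀ w 2 else 0
        else 0) =
        ((if P.r (inl 0) x then 0 else ∑ w, if P.r (inr w) x then gfun η δ w₀ w 0 else 0) +
          if P.r (inl 1) x then 0 else ∑ w, if P.r (inr w) x then gfun η δ w₀ w 1 else 0) +
          if P.r (inl 2) x then 0 else ∑ w, if P.r (inr w) x then gfun η δ w₀ w 2 else 0 := by
      have step : ∀ w, (if P.r (inr w) x then
          ((if ¬ P.r (inr w) (inl 0) then gfun η δ w₀ w 0 else 0) +
            if ¬ P.r (inr w) (inl 1) then gfun η δ w₀ w 1 else 0) +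
            if ¬ P.r (inr w) (inl 2) then gfun η δ w₀ w 2 else 0 else 0)
          = ((if P.r (inl 0) x then 0 else if P.r (inr w) x then gfun η δ w₀ w 0 else 0) +
              if P.r (inl 1) x then 0 else if P.r (inr w) x then gfun η δ w₀ w 1 else 0) +
              if P.r (inl 2) x then 0 else if P.r (inr w) x then gfun η δ w₀ w 2 else 0 := by
        intro w
        by_cases hwx : P.r (inr w) x
        · have Ei : ∀ i, P.r (inr w) (inl i) ↔ P.r (inl i) x :=
            fun i => ⟨fun h => P.iseqv.trans (P.iseqv.symm h) hwx,
                      fun h => P.iseqv.trans hwx (P.iseqv.symm h)⟩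
          simp only [hwx, if_true, Ei, ite_not]
        · simp [hwx]
      rw [Finset.sum_congr rfl fun w _ => step w, Finset.sum_add_distrib,
        Finset.sum_add_distrib]
      congr 1
      · congr 1
        · by_cases h : P.r (inl 0) x <;> simp [h]
        · by_cases h : P.r (inl 1) x <;> simp [h]
      · by_cases h : P.r (inl 2) x <;> simp [h]
    have hc := hcond x
    have hxx : P.r x x := P.iseqv.refl x
    rw [hwrow]
    by_cases h0 : P.r (inl 0) x <;> by_cases h1 : P.r (inl 1) x <;>
      by_cases h2 : P.r (inl 2) x <;>
      simp only [h0, h1, h2, if_true, if_false] at hc ⊢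
    · have E0 : ∀ v, P.r (inl 0) v ↔ P.r v x := fun v =>
        ⟨fun h => P.iseqv.trans (P.iseqv.symm h) h0, fun h => P.iseqv.trans h0 (P.iseqv.symm h)⟩
      have E1 : ∀ v, P.r (inl 1) v ↔ P.r v x := fun v =>
        ⟨fun h => P.iseqv.trans (P.iseqv.symm h) h1, fun h => P.iseqv.trans h1 (P.iseqv.symm h)⟩
      have E2 : ∀ v, P.r (inl 2) v ↔ P.r v x := fun v =>
        ⟨fun h => P.iseqv.trans (P.iseqv.symm h) h2, fun h => P.iseqv.trans h2 (P.iseqv.symm h)⟩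
      simp only [E0, E1, E2, h0, h1, h2, hxx, if_true, if_false, not_true, not_false_iff]
      simp only [hcompl]
      linear_combination hS - hc
    · have E0 : ∀ v, P.r (inl 0) v ↔ P.r v x := fun v =>
        ⟨fun h => P.iseqv.trans (P.iseqv.symm h) h0, fun h => P.iseqv.trans h0 (P.iseqv.symm h)⟩
      have E1 : ∀ v, P.r (inl 1) v ↔ P.r v x := fun v =>
        ⟨fun h => P.iseqv.trans (P.iseqv.symm h) h1, fun h => P.iseqv.trans h1 (P.iseqv.symm h)⟩
      simp only [E0, E1, h0, h1, h2, hxx, if_true, if_false, not_true, not_false_iff]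
      simp only [hcompl]
      linear_combination hS - hc
    · have E0 : ∀ v, P.r (inl 0) v ↔ P.r v x := fun v =>
        ⟨fun h => P.iseqv.trans (P.iseqv.symm h) h0, fun h => P.iseqv.trans h0 (P.iseqv.symm h)⟩
      have E2 : ∀ v, P.r (inl 2) v ↔ P.r v x := fun v =>
        ⟨fun h => P.iseqv.trans (P.iseqv.symm h) h2, fun h => P.iseqv.trans h2 (P.iseqv.symm h)⟩
      simp only [E0, E2, h0, h1, h2, hxx, if_true, if_false, not_true, not_false_iff]
      simp only [hcompl]
      linear_combination hS - hc
    · have E0 : ∀ v, P.r (inl 0) v ↔ P.r v x := fun v =>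
        ⟨fun h => P.iseqv.trans (P.iseqv.symm h) h0, fun h => P.iseqv.trans h0 (P.iseqv.symm h)⟩
      simp only [E0, h0, h1, h2, hxx, if_true, if_false, not_true, not_false_iff]
      simp only [hcompl]
      linear_combination hS - hc
    · have E1 : ∀ v, P.r (inl 1) v ↔ P.r v x := fun v =>
        ⟨fun h => P.iseqv.trans (P.iseqv.symm h) h1, fun h => P.iseqv.trans h1 (P.iseqv.symm h)⟩
      have E2 : ∀ v, P.r (inl 2) v ↔ P.r v x := fun v =>
        ⟨fun h => P.iseqv.trans (P.iseqv.symm h) h2, fun h => P.iseqv.trans h2 (P.iseqv.symm h)⟩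
      simp only [E1, E2, h0, h1, h2, hxx, if_true, if_false, not_true, not_false_iff]
      simp only [hcompl]
      linear_combination hS - hc
    · have E1 : ∀ v, P.r (inl 1) v ↔ P.r v x := fun v =>
        ⟨fun h => P.iseqv.trans (P.iseqv.symm h) h1, fun h => P.iseqv.trans h1 (P.iseqv.symm h)⟩
      simp only [E1, h0, h1, h2, hxx, if_true, if_false, not_true, not_false_iff]
      simp only [hcompl]
      linear_combination hS - hc
    · have E2 : ∀ v, P.r (inl 2) v ↔ P.r v x := fun v =>
        ⟨fun h => P.iseqv.trans (P.iseqv.symm h) h2, fun h => P.iseqv.trans h2 (P.iseqv.symm h)⟩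
      simp only [E2, h0, h1, h2, hxx, if_true, if_false, not_true, not_false_iff]
      simp only [hcompl]
      linear_combination hS - hc
    · linear_combination hS - hc

end QuotFlow


lemma hc3 : ∀ x : ZMod 3, x = 0 ∨ x = 1 ∨ x = 2 := by decide

lemma eta_exists {m : ℕ} (hm : 4 ≤ m) (t : ZMod 3) (w₀ : Fin m) :
    ∃ η : Fin m → ZMod 3, (∀ w, η w ≠ 0) ∧ η w₀ = 1 ∧ (∑ w, η w) = t := by
  have h0m : 0 < m := by omega
  have h1m : 1 < m := by omega
  have h2m : 2 < m := by omega
  have h3m : 3 < m := by omega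
  set p : Fin m := if w₀ = ⟨0, h0m⟩ then ⟨2, h2m⟩ else ⟨0, h0m⟩ with hp
  set q : Fin m := if w₀ = ⟨1, h1m⟩ then ⟨3, h3m⟩ else ⟨1, h1m⟩ with hq
  have hpq : p ≠ q := by
    by_cases h : w₀ = ⟨0, h0m⟩ <;> by_cases h' : w₀ = ⟨1, h1m⟩ <;>
      simp [hp, hq, h, h', Fin.ext_iff]
  have hpw : p ≠ w₀ := by
    by_cases h : w₀ = ⟨0, h0m⟩
    · rw [hp, if_pos h, h]; simp [Fin.ext_iff]
    · rw [hp, if_neg h]; exact fun hh => h hh.symm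
  have hqw : q ≠ w₀ := by
    by_cases h : w₀ = ⟨1, h1m⟩
    · rw [hq, if_pos h, h]; simp [Fin.ext_iff]
    · rw [hq, if_neg h]; exact fun hh => h hh.symm
  set c : ZMod 3 := t - (m : ZMod 3) with hcdef
  set a : ZMod 3 := if c = 0 then 0 else 1 with hadef
  set b : ZMod 3 := if c = 2 then 1 else 0 with hbdef
  have hab : a + b = c := by
    rcases hc3 c with h|h|h <;> rw [hadef, hbdef, h] <;> decide
  have ha1 : 1 + a ≠ 0 := by
    rcases hc3 c with h|h|h <;> rw [hadef, h] <;> decide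
  have hb1 : 1 + b ≠ 0 := by
    rcases hc3 c with h|h|h <;> rw [hbdef, h] <;> decide
  refine ⟨fun w => 1 + (if w = p then a else 0) + (if w = q then b else 0), ?_, ?_, ?_⟩
  · intro w
    by_cases h1 : w = p <;> by_cases h2 : w = q
    · exact absurd (h1 ▸ h2.symm).symm hpq
    · subst h1; simpa [h2] using ha1
    · subst h2; simpa [h1] using hb1
    · simp [h1, h2]
  · simp [Ne.symm hpw, Ne.symm hqw]
  · rw [Finset.sum_add_distrib, Finset.sum_add_distrib, Finset.sum_const,
      Finset.sum_ite_eq' Finset.univ p (fun _ => a),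
      Finset.sum_ite_eq' Finset.univ q (fun _ => b)]
    simp only [Finset.mem_univ, if_true, Finset.card_univ, Fintype.card_fin,
      nsmul_eq_mul, mul_one]
    rw [add_assoc, hab, hcdef]
    ring


lemma KB_connected (m : ℕ) (hm : 1 ≤ m) : (KB m).Connected := by
  have h0 : (0:ℕ) < m := hm
  have key : ∀ u : Fin 3 ⊕ Fin m, (KB m).Reachable u (inl 0) := by
    rintro (i | w)
    · exact ((KB_adj_lr m i ⟨0, h0⟩).reachable).trans ((KB_adj_rl m 0 ⟨0, h0⟩).reachable)
    · exact (KB_adj_rl m 0 w).reachable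
  exact ⟨fun u v => (key u).trans (key v).symm⟩

lemma KB_no_flow (m : ℕ) : ¬ HasNZFlow (KB m) (fun _ => (0 : ZMod 3)) := by
  rintro ⟨f, hanti, hnz, hcons⟩
  have hrow : ∀ w : Fin m, f (inr w) (inl 0) = f (inr w) (inl 1) ∧
      f (inr w) (inl 0) = f (inr w) (inl 2) := by
    intro w
    have h := hcons (inr w)
    rw [Finset.sum_filter, Fintype.sum_sum_type] at h
    simp only [KB_adj_rl, KB_adj_rr, if_true, if_false, Fin.sum_univ_three,
      Finset.sum_const_zero, add_zero] at h
    have d : ∀ a b c : ZMod 3, a ≠ 0 → b ≠ 0 → c ≠ 0 → a + b + c = 0 → a = b ∧ a = c := by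
      decide
    exact d _ _ _ (hnz _ _ (KB_adj_rl m 0 w)) (hnz _ _ (KB_adj_rl m 1 w))
      (hnz _ _ (KB_adj_rl m 2 w)) h
  have h2 := hcons (inl 2)
  have h0 := hcons (inl 0)
  rw [Finset.sum_filter, Fintype.sum_sum_type] at h2 h0
  simp only [KB_adj_lr, KB_adj_ll, if_true, Fin.sum_univ_three] at h2 h0
  simp (config := { decide := true }) only [if_true, if_false, zero_add, add_zero,
    true_and, and_true, false_and, and_false, or_false, false_or] at h2 h0
  -- h2 : ∑ w, f (inl 2) (inr w) = 0
  -- h0 : f (inl 0) (inl 1) + ∑ w, f (inl 0) (inr w) = 0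
  have e : ∀ w, f (inl 0) (inr w) = f (inl 2) (inr w) := by
    intro w
    rw [hanti _ _ (KB_adj_lr m 0 w), hanti _ _ (KB_adj_lr m 2 w), (hrow w).2]
  rw [Finset.sum_congr rfl (fun w _ => e w), h2, add_zero] at h0
  exact hnz _ _ ((KB_adj_ll m 0 1).2 (Or.inl ⟨rfl, rfl⟩)) h0

lemma KB_card_edges (m : ℕ) : Nat.card (KB m).edgeSet = 3 * m + 1 := by
  have hdeg : ∀ u : Fin 3 ⊕ Fin m, (KB m).degree u =
      (Finset.univ.filter (fun v => (KB m).Adj u v)).card := by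
    intro u
    rw [← SimpleGraph.neighborFinset_eq_filter]
    rfl
  have hsum := SimpleGraph.sum_degrees_eq_twice_card_edges (KB m)
  have hval : ∑ u, (KB m).degree u = 6 * m + 2 := by
    rw [Fintype.sum_sum_type]
    have hl : ∀ i : Fin 3, (KB m).degree (inl i) =
        m + (if i = 0 ∨ i = 1 then 1 else 0) := by
      intro i
      rw [hdeg, Finset.card_filter]
      rw [Fintype.sum_sum_type]
      simp only [KB_adj_lr, KB_adj_ll, if_true]
      rw [Finset.sum_const, Finset.card_univ, Fintype.card_fin]
      fin_cases i <;> simp (config := { decide := true }) [Fin.sum_univ_three] <;> ring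
    have hr : ∀ w : Fin m, (KB m).degree (inr w) = 3 := by
      intro w
      rw [hdeg, Finset.card_filter, Fintype.sum_sum_type]
      simp only [KB_adj_rl, KB_adj_rr, if_true, if_false, Fin.sum_univ_three]
      simp
    rw [Fin.sum_univ_three]
    simp only [hl, hr]
    rw [Finset.sum_const, Finset.card_univ, Fintype.card_fin]
    simp (config := { decide := true }) only [if_true, if_false]
    ring
  rw [hval] at hsum
  have hc : Nat.card (KB m).edgeSet = (KB m).edgeFinset.card := by
    rw [Nat.card_eq_fintype_card, SimpleGraph.edgeFinset_card]
  omega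


lemma right_part_left {m : ℕ} {P : Setoid (Fin 3 ⊕ Fin m)}
    (hPC : PartsConnected (KB m) P) {w w' : Fin m} (hne : w ≠ w')
    (hr : P.r (inr w) (inr w')) : ∃ i, P.r (inl i) (inr w) := by
  by_contra hno
  push_neg at hno
  have hconn := hPC (inr w)
  have ha : (inr w' : Fin 3 ⊕ Fin m) ∈ {v | P.r v (inr w)} := P.iseqv.symm hr
  have hb : (inr w : Fin 3 ⊕ Fin m) ∈ {v | P.r v (inr w)} := P.iseqv.refl _
  obtain ⟨p⟩ := hconn.preconnected ⟨inr w', ha⟩ ⟨inr w, hb⟩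
  have hne' : (⟨inr w', ha⟩ : {v // v ∈ {v | P.r v (inr w)}}) ≠ ⟨inr w, hb⟩ := by
    simp only [ne_eq, Subtype.mk.injEq]
    exact fun h => hne (inr.inj h).symm
  have hnn : ¬ p.Nil := SimpleGraph.Walk.not_nil_of_ne hne'
  have hadj : (SimpleGraph.induce _ (KB m)).Adj _ (p.getVert 1) := p.adj_snd hnn
  obtain ⟨⟨vv, hvv⟩, hy⟩ : ∃ y, p.getVert 1 = y := ⟨_, rfl⟩
  rw [hy] at hadj
  rcases vv with i | w''
  · exact hno i hvv
  · exact KB_adj_rr m w' w'' hadj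

lemma KB_quot_flow {m : ℕ} (hm : 4 ≤ m) (P : Setoid (Fin 3 ⊕ Fin m))
    (hPC : PartsConnected (KB m) P) (hnt : ∃ x y : Fin 3 ⊕ Fin m, x ≠ y ∧ P.r x y) :
    HasNZFlowQuot (KB m) (fun _ => (0 : ZMod 3)) P := by
  have hm1 : (0:ℕ) < m := by omega
  by_cases r01 : P.r (inl 0) (inl 1)
  · by_cases r02 : P.r (inl 0) (inl 2)
    · -- all three left vertices together
      obtain ⟨η, hη, hη1, hT⟩ := eta_exists hm 0 ⟨0, hm1⟩
      refine quot_flow_param P η (fun _ => 0) ⟨0, hm1⟩ 1 (by decide) hη (by decide)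
        (fun i _ => by rw [hη1]; show (1:ZMod 3) + 0 ≠ 0; decide) ?_
      intro x
      by_cases h0 : P.r (inl 0) x <;> by_cases h1 : P.r (inl 1) x <;>
        by_cases h2 : P.r (inl 2) x <;>
        simp only [h0, h1, h2, if_true, if_false] <;>
        first
          | (rw [hT]; decide)
          | decide
          | exact absurd (P.iseqv.trans (P.iseqv.symm r01) h0) h1
          | exact absurd (P.iseqv.trans r01 h1) h0
          | exact absurd (P.iseqv.trans (P.iseqv.symm r02) h0) h2
          | exact absurd (P.iseqv.trans r02 h2) h0
    · -- 0 and 1 together, 2 separate : T = 0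
      obtain ⟨η, hη, hη1, hT⟩ := eta_exists hm 0 ⟨0, hm1⟩
      refine quot_flow_param P η (fun _ => 0) ⟨0, hm1⟩ 1 (by decide) hη (by decide)
        (fun i _ => by rw [hη1]; show (1:ZMod 3) + 0 ≠ 0; decide) ?_
      intro x
      by_cases h0 : P.r (inl 0) x <;> by_cases h1 : P.r (inl 1) x <;>
        by_cases h2 : P.r (inl 2) x <;>
        simp only [h0, h1, h2, if_true, if_false] <;>
        first
          | (rw [hT]; decide)
          | decide
          | exact absurd (P.iseqv.trans (P.iseqv.symm r01) h0) h1
          | exact absurd (P.iseqv.trans r01 h1) h0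
          | exact absurd (P.iseqv.trans h0 (P.iseqv.symm h2)) r02
  · by_cases r02 : P.r (inl 0) (inl 2)
    · -- 0 and 2 together, 1 separate : T = 1, z = 2
      obtain ⟨η, hη, hη1, hT⟩ := eta_exists hm 1 ⟨0, hm1⟩
      refine quot_flow_param P η (fun _ => 0) ⟨0, hm1⟩ 2 (by decide) hη (by decide)
        (fun i _ => by rw [hη1]; show (1:ZMod 3) + 0 ≠ 0; decide) ?_
      intro x
      by_cases h0 : P.r (inl 0) x <;> by_cases h1 : P.r (inl 1) x <;>
        by_cases h2 : P.r (inl 2) x <;>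
        simp only [h0, h1, h2, if_true, if_false] <;>
        first
          | (rw [hT]; decide)
          | decide
          | exact absurd (P.iseqv.trans (P.iseqv.symm r02) h0) h2
          | exact absurd (P.iseqv.trans r02 h2) h0
          | exact absurd (P.iseqv.trans h0 (P.iseqv.symm h1)) r01
    · by_cases r12 : P.r (inl 1) (inl 2)
      · -- 1 and 2 together, 0 separate : T = 1, z = 1
        obtain ⟨η, hη, hη1, hT⟩ := eta_exists hm 1 ⟨0, hm1⟩
        refine quot_flow_param P η (fun _ => 0) ⟨0, hm1⟩ 1 (by decide) hη (by decide)
          (fun i _ => by rw [hη1]; show (1:ZMod 3) + 0 ≠ 0; decide) ?_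
        intro x
        by_cases h0 : P.r (inl 0) x <;> by_cases h1 : P.r (inl 1) x <;>
          by_cases h2 : P.r (inl 2) x <;>
          simp only [h0, h1, h2, if_true, if_false] <;>
          first
            | (rw [hT]; decide)
            | decide
            | exact absurd (P.iseqv.trans (P.iseqv.symm r12) h1) h2
            | exact absurd (P.iseqv.trans r12 h2) h1
            | exact absurd (P.iseqv.trans h0 (P.iseqv.symm h1)) r01
            | exact absurd (P.iseqv.trans h0 (P.iseqv.symm h2)) r02
      · -- all three left vertices separate
        have hW : ∃ (w₀ : Fin m) (j : Fin 3), P.r (inr w₀) (inl j) := by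
          obtain ⟨xx, yy, hxy, hrel⟩ := hnt
          rcases xx with i|w <;> rcases yy with i'|w'
          · exfalso
            fin_cases i <;> fin_cases i' <;>
              first
                | exact hxy rfl
                | exact r01 hrel
                | exact r01 (P.iseqv.symm hrel)
                | exact r02 hrel
                | exact r02 (P.iseqv.symm hrel)
                | exact r12 hrel
                | exact r12 (P.iseqv.symm hrel)
          · exact ⟨w', i, P.iseqv.symm hrel⟩
          · exact ⟨w, i', hrel⟩
          · obtain ⟨i, hi⟩ := right_part_left hPC (fun h => hxy (congrArg inr h)) hrel
            exact ⟨w, i, P.iseqv.symm hi⟩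
        obtain ⟨w₀, j, hw0j⟩ := hW
        fin_cases j
        · -- w₀ with left 0 : T = 2, δ = ![2,0,1]
          obtain ⟨η, hη, hη1, hT⟩ := eta_exists hm 2 w₀
          refine quot_flow_param P η ![2,0,1] w₀ 1 (by decide) hη (by decide) ?_ ?_
          · intro i hi
            fin_cases i
            · exact absurd hw0j hi
            · rw [hη1]; decide
            · rw [hη1]; decide
          · intro x
            by_cases h0 : P.r (inl 0) x <;> by_cases h1 : P.r (inl 1) x <;>
              by_cases h2 : P.r (inl 2) x <;>
              simp only [h0, h1, h2, if_true, if_false] <;>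
              first
                | (rw [hT]; decide)
                | decide
                | exact absurd (P.iseqv.trans h0 (P.iseqv.symm h1)) r01
                | exact absurd (P.iseqv.trans h0 (P.iseqv.symm h2)) r02
                | exact absurd (P.iseqv.trans h1 (P.iseqv.symm h2)) r12
        · -- w₀ with left 1 : T = 0, δ = ![1,2,0]
          obtain ⟨η, hη, hη1, hT⟩ := eta_exists hm 0 w₀
          refine quot_flow_param P η ![1,2,0] w₀ 1 (by decide) hη (by decide) ?_ ?_
          · intro i hi
            fin_cases i
            · rw [hη1]; decide
            · exact absurd hw0j hi
            · rw [hη1]; decide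
          · intro x
            by_cases h0 : P.r (inl 0) x <;> by_cases h1 : P.r (inl 1) x <;>
              by_cases h2 : P.r (inl 2) x <;>
              simp only [h0, h1, h2, if_true, if_false] <;>
              first
                | (rw [hT]; decide)
                | decide
                | exact absurd (P.iseqv.trans h0 (P.iseqv.symm h1)) r01
                | exact absurd (P.iseqv.trans h0 (P.iseqv.symm h2)) r02
                | exact absurd (P.iseqv.trans h1 (P.iseqv.symm h2)) r12
        · -- w₀ with left 2 : T = 1, δ = ![0,1,2]
          obtain ⟨η, hη, hη1, hT⟩ := eta_exists hm 1 w₀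
          refine quot_flow_param P η ![0,1,2] w₀ 1 (by decide) hη (by decide) ?_ ?_
          · intro i hi
            fin_cases i
            · rw [hη1]; decide
            · rw [hη1]; decide
            · exact absurd hw0j hi
          · intro x
            by_cases h0 : P.r (inl 0) x <;> by_cases h1 : P.r (inl 1) x <;>
              by_cases h2 : P.r (inl 2) x <;>
              simp only [h0, h1, h2, if_true, if_false] <;>
              first
                | (rw [hT]; decide)
                | decide
                | exact absurd (P.iseqv.trans h0 (P.iseqv.symm h1)) r01
                | exact absurd (P.iseqv.trans h0 (P.iseqv.symm h2)) r02
                | exact absurd (P.iseqv.trans h1 (P.iseqv.symm h2)) r12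

end Aux

/-- For `n ≥ 7`, the graph `K⁺_{3,n−3}` is `ℤ₃`-flow-critical and has `3n − 8` edges. -/
theorem kThreePlus_flow_critical (n : ℕ) (hn : 7 ≤ n) :
    FlowCritical (kThreePlus n) (fun _ => (0 : ZMod 3)) ∧
    (Nat.card (kThreePlus n).edgeSet : ℤ) = 3 * n - 8 := by
  have hKB : kThreePlus n = KB (n - 3) := rfl
  have hm : 4 ≤ n - 3 := by omega
  constructor
  · refine ⟨?_, ?_, ?_, ?_⟩
    · intro x
      simp
    · rw [hKB]; exact KB_connected (n-3) (by omega)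
    · rw [hKB]; exact KB_no_flow (n-3)
    · intro Q hQc hQnt
      rw [hKB] at hQc ⊢
      exact KB_quot_flow hm Q hQc hQnt
  · rw [hKB, KB_card_edges]
    omega
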